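/- In the ring R = k[a,b,c,d]/((a,b) ∩ (c,d)) localized at (a,b,c,d) (k a field), with x_1 = a+c, x_2 = b+d: the sequence x_1, x_2 is a system of parameters and its limit closure satisfies (x_1,x_2)^lim = m, the maximal ideal. -/

import Mathlib

open MvPolynomial

/-- The defining ideal `(a,b) ∩ (c,d)` of `k[a,b,c,d]`. -/
noncomputable def defIdeal (k : Type) [Field k] : Ideal (MvPolynomial (Fin 4) k) :=
  Ideal.span {X 0, X 1} ⊓ Ideal.span {X 2, X 3}

/-- The ring `k[a,b,c,d]/((a,b) ∩ (c,d))`. -/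
abbrev QR (k : Type) [Field k] : Type :=
  MvPolynomial (Fin 4) k ⧸ defIdeal k

/-- The irrelevant maximal ideal `(a,b,c,d)` of `k[a,b,c,d]/((a,b) ∩ (c,d))`. -/
noncomputable def mQ (k : Type) [Field k] : Ideal (QR k) :=
  Ideal.span {Ideal.Quotient.mk (defIdeal k) (X 0), Ideal.Quotient.mk (defIdeal k) (X 1),
    Ideal.Quotient.mk (defIdeal k) (X 2), Ideal.Quotient.mk (defIdeal k) (X 3)}

namespace Stmt16Aux

/-! ### Generic helper lemmas -/

lemma ker_eq_span_of_section {R S : Type*} [CommRing R] [CommRing S]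
    (φ : R →+* S) (s : S →+* R) (I : Ideal R)
    (h1 : I ≤ RingHom.ker φ)
    (h2 : ∀ f, Ideal.Quotient.mk I (s (φ f)) = Ideal.Quotient.mk I f) :
    RingHom.ker φ = I := by
  refine le_antisymm ?_ h1
  intro f hf
  rw [RingHom.mem_ker] at hf
  have h := h2 f
  rw [hf, map_zero, map_zero] at h
  exact Ideal.Quotient.eq_zero_iff_mem.mp h.symm

lemma map_lt_map_of_surj {R S : Type*} [CommRing R] [CommRing S] (φ : R →+* S)
    (hs : Function.Surjective φ) {p q : Ideal R} (hkp : RingHom.ker φ ≤ p) (h : p < q) :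
    p.map φ < q.map φ := by
  have cp : (p.map φ).comap φ = p := by
    rw [Ideal.comap_map_of_surjective φ hs, ← RingHom.ker_eq_comap_bot, sup_eq_left.mpr hkp]
  have cq : (q.map φ).comap φ = q := by
    rw [Ideal.comap_map_of_surjective φ hs, ← RingHom.ker_eq_comap_bot,
      sup_eq_left.mpr (hkp.trans h.le)]
  exact lt_of_le_of_ne (Ideal.map_mono h.le) fun e => h.ne (by rw [← cp, ← cq, e])

lemma coeff_mul_monomial_notle {σ : Type*} {R : Type*} [CommSemiring R] {m s : σ →₀ ℕ}
    (h : ¬ s ≤ m) (r : R) (p : MvPolynomial σ R) :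
    MvPolynomial.coeff m (p * MvPolynomial.monomial s r) = 0 := by
  classical
  rw [MvPolynomial.coeff_mul]
  apply Finset.sum_eq_zero
  rintro ⟨u, v⟩ huv
  rw [Finset.HasAntidiagonal.mem_antidiagonal] at huv
  rw [MvPolynomial.coeff_monomial]
  split_ifs with hsv
  · exfalso
    apply h
    rw [← huv, ← hsv]
    exact self_le_add_left s u
  · exact mul_zero _

/-! ### The variable-killing maps and their kernels -/

variable (k : Type) [Field k]

noncomputable def ψab : MvPolynomial (Fin 4) k →ₐ[k] MvPolynomial (Fin 2) k :=
  aeval ![0, 0, X 0, X 1]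

noncomputable def sab : MvPolynomial (Fin 2) k →ₐ[k] MvPolynomial (Fin 4) k :=
  aeval ![X 2, X 3]

lemma ψab_comp_sab : (ψab k).comp (sab k) = AlgHom.id k _ := by
  apply MvPolynomial.algHom_ext
  intro i
  fin_cases i <;> simp [ψab, sab]

lemma ψab_surj : Function.Surjective (ψab k) :=
  fun y => ⟨sab k y, AlgHom.congr_fun (ψab_comp_sab k) y⟩

lemma ker_ψab : RingHom.ker (ψab k) = Ideal.span {X 0, X 1} := by
  apply ker_eq_span_of_section _ (sab k).toRingHom
  · rw [Ideal.span_le]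
    rintro x (rfl | rfl) <;>
      simp [SetLike.mem_coe, RingHom.mem_ker, ψab]
  · intro f
    have key : (Ideal.Quotient.mkₐ k (Ideal.span {X (0:Fin 4), X 1})).comp
        ((sab k).comp (ψab k)) = Ideal.Quotient.mkₐ k _ := by
      apply MvPolynomial.algHom_ext
      intro i
      fin_cases i <;>
        simp [ψab, sab, Ideal.Quotient.mkₐ_eq_mk] <;>
        exact (Ideal.Quotient.eq_zero_iff_mem.mpr (Ideal.subset_span (by simp))).symm
    simpa [Ideal.Quotient.mkₐ_eq_mk] using AlgHom.congr_fun key f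

noncomputable def ψcd : MvPolynomial (Fin 4) k →ₐ[k] MvPolynomial (Fin 2) k :=
  aeval ![X 0, X 1, 0, 0]

noncomputable def scd : MvPolynomial (Fin 2) k →ₐ[k] MvPolynomial (Fin 4) k :=
  aeval ![X 0, X 1]

lemma ψcd_comp_scd : (ψcd k).comp (scd k) = AlgHom.id k _ := by
  apply MvPolynomial.algHom_ext
  intro i
  fin_cases i <;> simp [ψcd, scd]

lemma ψcd_surj : Function.Surjective (ψcd k) :=
  fun y => ⟨scd k y, AlgHom.congr_fun (ψcd_comp_scd k) y⟩

lemma ker_ψcd : RingHom.ker (ψcd k) = Ideal.span {X 2, X 3} := by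
  apply ker_eq_span_of_section _ (scd k).toRingHom
  · rw [Ideal.span_le]
    rintro x (rfl | rfl) <;>
      simp [SetLike.mem_coe, RingHom.mem_ker, ψcd]
  · intro f
    have key : (Ideal.Quotient.mkₐ k (Ideal.span {X (2:Fin 4), X 3})).comp
        ((scd k).comp (ψcd k)) = Ideal.Quotient.mkₐ k _ := by
      apply MvPolynomial.algHom_ext
      intro i
      fin_cases i <;>
        simp [ψcd, scd, Ideal.Quotient.mkₐ_eq_mk] <;>
        exact (Ideal.Quotient.eq_zero_iff_mem.mpr (Ideal.subset_span (by simp))).symm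
    simpa [Ideal.Quotient.mkₐ_eq_mk] using AlgHom.congr_fun key f

noncomputable def ψ3 : MvPolynomial (Fin 4) k →ₐ[k] MvPolynomial (Fin 1) k :=
  aeval ![0, 0, 0, X 0]

noncomputable def s3 : MvPolynomial (Fin 1) k →ₐ[k] MvPolynomial (Fin 4) k :=
  aeval ![X 3]

lemma ker_ψ3 : RingHom.ker (ψ3 k) = Ideal.span {X 0, X 1, X 2} := by
  apply ker_eq_span_of_section _ (s3 k).toRingHom
  · rw [Ideal.span_le]
    rintro x (rfl | rfl | rfl) <;>
      simp [SetLike.mem_coe, RingHom.mem_ker, ψ3]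
  · intro f
    have key : (Ideal.Quotient.mkₐ k (Ideal.span {X (0:Fin 4), X 1, X 2})).comp
        ((s3 k).comp (ψ3 k)) = Ideal.Quotient.mkₐ k _ := by
      apply MvPolynomial.algHom_ext
      intro i
      fin_cases i <;>
        simp [ψ3, s3, Ideal.Quotient.mkₐ_eq_mk] <;>
        exact (Ideal.Quotient.eq_zero_iff_mem.mpr (Ideal.subset_span (by simp))).symm
    simpa [Ideal.Quotient.mkₐ_eq_mk] using AlgHom.congr_fun key f

lemma ker_cc4 : RingHom.ker (constantCoeff : MvPolynomial (Fin 4) k →+* k) =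
    Ideal.span {X 0, X 1, X 2, X 3} := by
  apply ker_eq_span_of_section _ (C : k →+* MvPolynomial (Fin 4) k)
  · rw [Ideal.span_le]
    rintro x (rfl | rfl | rfl | rfl) <;>
      simp [SetLike.mem_coe, RingHom.mem_ker]
  · intro f
    have key : (Ideal.Quotient.mk (Ideal.span {X (0:Fin 4), X 1, X 2, X 3})).comp
        ((C : k →+* MvPolynomial (Fin 4) k).comp constantCoeff) =
        Ideal.Quotient.mk _ := by
      apply MvPolynomial.ringHom_ext
      · intro r; simp
      · intro i
        fin_cases i <;>
          simp <;>
          exact (Ideal.Quotient.eq_zero_iff_mem.mpr (Ideal.subset_span (by simp))).symm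
    exact RingHom.congr_fun key f

lemma ker_cc2 : RingHom.ker (constantCoeff : MvPolynomial (Fin 2) k →+* k) =
    Ideal.span {X 0, X 1} := by
  apply ker_eq_span_of_section _ (C : k →+* MvPolynomial (Fin 2) k)
  · rw [Ideal.span_le]
    rintro x (rfl | rfl) <;>
      simp [SetLike.mem_coe, RingHom.mem_ker]
  · intro f
    have key : (Ideal.Quotient.mk (Ideal.span {X (0:Fin 2), X 1})).comp
        ((C : k →+* MvPolynomial (Fin 2) k).comp constantCoeff) =
        Ideal.Quotient.mk _ := by
      apply MvPolynomial.ringHom_ext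
      · intro r; simp
      · intro i
        fin_cases i <;>
          simp <;>
          exact (Ideal.Quotient.eq_zero_iff_mem.mpr (Ideal.subset_span (by simp))).symm
    exact RingHom.congr_fun key f

lemma cc_comp_ψcd : (constantCoeff : MvPolynomial (Fin 2) k →+* k).comp (ψcd k : _ →+* _) =
    (constantCoeff : MvPolynomial (Fin 4) k →+* k) := by
  apply MvPolynomial.ringHom_ext
  · intro r
    simp [ψcd]
  · intro i
    fin_cases i <;> simp [ψcd]

end Stmt16Aux

namespace Stmt16Aux

/-! ### Dimension two of the plane: no chains of length three -/

open Polynomial nonZeroDivisors in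
lemma exists_C_mem_span {A : Type*} [CommRing A] [IsDomain A] [UniqueFactorizationMonoid A]
    {f g : A[X]} (hf : Prime f) (hfg : ¬ f ∣ g) (hg0 : g ≠ 0) :
    ∃ d : A, d ≠ 0 ∧ Polynomial.C d ∈ Ideal.span {f, g} := by
  classical
  letI := UniqueFactorizationMonoid.normalizationMonoid (α := A)
  letI := UniqueFactorizationMonoid.toNormalizedGCDMonoid A
  by_cases hdeg : f.natDegree = 0
  · obtain ⟨a, ha⟩ := Polynomial.natDegree_eq_zero.mp hdeg
    refine ⟨a, ?_, ?_⟩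
    · rintro rfl; exact hf.ne_zero (by simp [← ha])
    · rw [ha]; exact Ideal.subset_span (Set.mem_insert _ _)
  · have hprim : f.IsPrimitive := by
      intro r hr
      obtain ⟨w, hw⟩ := hr
      rcases hf.irreducible.isUnit_or_isUnit hw with h | h
      · exact Polynomial.isUnit_C.mp h
      · exfalso
        apply hdeg
        have : f.natDegree ≤ (Polynomial.C r).natDegree + w.natDegree := hw ▸ Polynomial.natDegree_mul_le
        simpa [Polynomial.natDegree_eq_zero_of_isUnit h] using this
    set K := FractionRing A
    set ι := algebraMap A K
    have hinj : Function.Injective ι := IsFractionRing.injective A K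
    have hfirr' : Irreducible (f.map ι) :=
      (hprim.irreducible_iff_irreducible_map_fraction_map (K := K)).mp hf.irreducible
    have hnd : ¬ f.map ι ∣ g.map ι := by
      intro hdvd
      have hprime' : Prime (f.map ι) := hfirr'.prime
      have hgdecomp := g.eq_C_content_mul_primPart
      rw [hgdecomp, Polynomial.map_mul, Polynomial.map_C] at hdvd
      rcases hprime'.dvd_mul.mp hdvd with h | h
      · have hcne : g.content ≠ 0 := by simpa [Polynomial.content_eq_zero_iff] using hg0
        have : IsUnit (Polynomial.C (ι g.content)) :=
          Polynomial.isUnit_C.mpr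
            ((isUnit_iff_ne_zero).mpr (fun h0 => hcne (hinj (by simpa using h0))))
        exact hfirr'.not_isUnit (isUnit_of_dvd_unit h this)
      · have : f ∣ g.primPart :=
          hprim.dvd_of_fraction_map_dvd_fraction_map (K := K) h
        exact hfg (this.trans (Dvd.intro_left _ hgdecomp.symm))
    have hco : IsCoprime (f.map ι) (g.map ι) := hfirr'.coprime_iff_not_dvd.mpr hnd
    obtain ⟨u, v, huv⟩ := hco
    obtain ⟨⟨bu, hbu⟩, hU⟩ := IsLocalization.integerNormalization_map_to_map A⁰ u
    obtain ⟨⟨bv, hbv⟩, hV⟩ := IsLocalization.integerNormalization_map_to_map A⁰ v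
    refine ⟨bu * bv, mul_ne_zero (mem_nonZeroDivisors_iff_ne_zero.mp hbu)
      (mem_nonZeroDivisors_iff_ne_zero.mp hbv), ?_⟩
    have hW : Polynomial.C (bu * bv) =
        (Polynomial.C bv * IsLocalization.integerNormalization A⁰ u) * f +
        (Polynomial.C bu * IsLocalization.integerNormalization A⁰ v) * g := by
      apply Polynomial.map_injective ι hinj
      rw [Polynomial.map_add, Polynomial.map_mul, Polynomial.map_mul, Polynomial.map_mul,
        Polynomial.map_mul, Polynomial.map_C, Polynomial.map_C, Polynomial.map_C]
      have hb' : ∀ a : A, algebraMap A K[X] a = Polynomial.C (ι a) := fun a => by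
        rw [IsScalarTower.algebraMap_apply A K K[X], Polynomial.algebraMap_eq]
      rw [Algebra.smul_def] at hU hV
      simp only [hb'] at hU hV ⊢
      rw [hU, hV]
      simp only [map_mul]
      linear_combination (-(Polynomial.C (ι bu) * Polynomial.C (ι bv))) * huv
    rw [hW]
    exact Ideal.mem_span_pair.mpr ⟨_, _, rfl⟩

open Polynomial in
lemma polyChain {A : Type*} [CommRing A] [IsDomain A] [IsPrincipalIdealRing A]
    {q1 q2 q3 : Ideal (Polynomial A)} (h1 : q1.IsPrime) (h2 : q2.IsPrime) (h3 : q3.IsPrime)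
    (hb : q1 ≠ ⊥) (h12 : q1 < q2) (h23 : q2 < q3) : False := by
  classical
  obtain ⟨f, hfq1, hf⟩ := h1.exists_mem_prime_of_ne_bot hb
  obtain ⟨g, hgq2, hgq1⟩ := SetLike.exists_of_lt h12
  have hfg : ¬ f ∣ g := fun ⟨w, hw⟩ => hgq1 (hw ▸ q1.mul_mem_right w hfq1)
  have hg0 : g ≠ 0 := fun h => hgq1 (h ▸ q1.zero_mem)
  obtain ⟨d, hd0, hdmem⟩ := exists_C_mem_span hf hfg hg0
  have hCd : Polynomial.C d ∈ q2 := by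
    refine Ideal.span_le.mpr ?_ hdmem
    rintro x (rfl | rfl)
    · exact h12.le hfq1
    · exact hgq2
  set P : Ideal A := q2.comap Polynomial.C with hP
  haveI hPprime : P.IsPrime := inferInstance
  have hPne : P ≠ ⊥ := fun h => hd0 (by
    have : d ∈ P := Ideal.mem_comap.mpr hCd
    rwa [h, Ideal.mem_bot] at this)
  haveI hPmax : P.IsMaximal := IsPrime.to_maximal_ideal hPne
  letI : Field (A ⧸ P) := Ideal.Quotient.field P
  set φ : Polynomial A →+* Polynomial (A ⧸ P) :=
    Polynomial.mapRingHom (Ideal.Quotient.mk P) with hφ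
  have hsurj : Function.Surjective φ := Polynomial.map_surjective _ Ideal.Quotient.mk_surjective
  have hker : RingHom.ker φ = P.map Polynomial.C := by
    rw [hφ, Polynomial.ker_mapRingHom, Ideal.mk_ker]
  have hker2 : RingHom.ker φ ≤ q2 := by
    rw [hker, Ideal.map_le_iff_le_comap]
  have hker3 : RingHom.ker φ ≤ q3 := hker2.trans h23.le
  haveI hp2 : (q2.map φ).IsPrime := Ideal.map_isPrime_of_surjective hsurj hker2
  haveI hp3 : (q3.map φ).IsPrime := Ideal.map_isPrime_of_surjective hsurj hker3
  have hc2 : (q2.map φ).comap φ = q2 := by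
    rw [Ideal.comap_map_of_surjective φ hsurj, ← RingHom.ker_eq_comap_bot, sup_eq_left.mpr hker2]
  have hc3 : (q3.map φ).comap φ = q3 := by
    rw [Ideal.comap_map_of_surjective φ hsurj, ← RingHom.ker_eq_comap_bot, sup_eq_left.mpr hker3]
  have hlt : q2.map φ < q3.map φ := by
    refine lt_of_le_of_ne (Ideal.map_mono h23.le) (fun h => h23.ne ?_)
    rw [← hc2, ← hc3, h]
  by_cases hbot : q2.map φ = ⊥
  · have hq2eq : q2 = P.map Polynomial.C := by
      rw [← hc2, hbot, ← RingHom.ker_eq_comap_bot, hker]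
    obtain ⟨p, hp⟩ := (IsPrincipalIdealRing.principal P).principal
    have hq2span : q2 = Ideal.span {Polynomial.C p} := by
      rw [hq2eq, hp]
      simp [Ideal.map_span]
    have hCpnu : ¬ IsUnit (Polynomial.C p) := by
      intro hu
      have : q2 = ⊤ := by
        rw [hq2span, Ideal.span_singleton_eq_top.mpr hu]
      exact h2.ne_top this
    have hfdvd : Polynomial.C p ∣ f := by
      rw [← Ideal.mem_span_singleton, ← hq2span]
      exact h12.le hfq1
    obtain ⟨w, hw⟩ := hfdvd
    rcases hf.irreducible.isUnit_or_isUnit hw with h | h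
    · exact hCpnu h
    · obtain ⟨wu, rfl⟩ := h
      have hCp : Polynomial.C p ∈ q1 := by
        have : f * (wu⁻¹ : _ˣ) ∈ q1 := q1.mul_mem_right _ hfq1
        rwa [hw, mul_assoc, Units.mul_inv, mul_one] at this
      have : q2 ≤ q1 := by
        rw [hq2span]
        exact (Ideal.span_singleton_le_iff_mem _).mpr hCp
      exact (not_le_of_gt h12) this
  · haveI hmax : (q2.map φ).IsMaximal := IsPrime.to_maximal_ideal hbot
    have h1 : q3.map φ = ⊤ := hmax.1.2 _ hlt
    have : q3 = ⊤ := by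
      rw [← hc3, h1, Ideal.comap_top]
    exact h3.ne_top this

variable (k : Type) [Field k]

noncomputable def e2 : MvPolynomial (Fin 2) k ≃ₐ[k] Polynomial (Polynomial k) :=
  (MvPolynomial.finSuccEquiv k 1).trans (Polynomial.mapAlgEquiv
    ((MvPolynomial.finSuccEquiv k 0).trans (Polynomial.mapAlgEquiv
      (MvPolynomial.isEmptyAlgEquiv k (Fin 0)))))

lemma dim2chainP2 {q1 q2 q3 : Ideal (MvPolynomial (Fin 2) k)}
    (h1 : q1.IsPrime) (h2 : q2.IsPrime) (h3 : q3.IsPrime)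
    (hb : q1 ≠ ⊥) (h12 : q1 < q2) (h23 : q2 < q3) : False := by
  set ε : MvPolynomial (Fin 2) k →+* Polynomial (Polynomial k) :=
    (e2 k).toAlgHom.toRingHom with hε
  have hs : Function.Surjective ε := (e2 k).surjective
  have hker : RingHom.ker ε = ⊥ := by
    rw [← RingHom.injective_iff_ker_eq_bot]
    exact (e2 k).injective
  have hkle : ∀ q : Ideal (MvPolynomial (Fin 2) k), RingHom.ker ε ≤ q :=
    fun q => hker ▸ bot_le
  haveI p1 : (q1.map ε).IsPrime := Ideal.map_isPrime_of_surjective hs (hkle _)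
  haveI p2 : (q2.map ε).IsPrime := Ideal.map_isPrime_of_surjective hs (hkle _)
  haveI p3 : (q3.map ε).IsPrime := Ideal.map_isPrime_of_surjective hs (hkle _)
  refine polyChain p1 p2 p3 ?_ (map_lt_map_of_surj ε hs (hkle _) h12)
    (map_lt_map_of_surj ε hs (hkle _) h23)
  intro h
  apply hb
  have : q1 ≤ RingHom.ker ε := by
    rw [RingHom.ker_eq_comap_bot, ← h]
    exact Ideal.le_comap_map
  rw [hker] at this
  exact le_bot_iff.mp this

lemma chainKill (φ : MvPolynomial (Fin 4) k →+* MvPolynomial (Fin 2) k)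
    (hs : Function.Surjective φ) {p0 p1 p2 p3 : Ideal (MvPolynomial (Fin 4) k)}
    (h1 : p1.IsPrime) (h2 : p2.IsPrime) (h3 : p3.IsPrime)
    (hker : RingHom.ker φ ≤ p0) (h01 : p0 < p1) (h12 : p1 < p2) (h23 : p2 < p3) : False := by
  have hk1 : RingHom.ker φ ≤ p1 := hker.trans h01.le
  haveI q1 : (p1.map φ).IsPrime := Ideal.map_isPrime_of_surjective hs hk1
  haveI q2 : (p2.map φ).IsPrime := Ideal.map_isPrime_of_surjective hs (hk1.trans h12.le)
  haveI q3 : (p3.map φ).IsPrime :=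
    Ideal.map_isPrime_of_surjective hs ((hk1.trans h12.le).trans h23.le)
  refine dim2chainP2 k q1 q2 q3 ?_ (map_lt_map_of_surj φ hs hk1 h12)
    (map_lt_map_of_surj φ hs (hk1.trans h12.le) h23)
  intro h
  have : p1 ≤ RingHom.ker φ := by
    rw [RingHom.ker_eq_comap_bot, ← h]
    exact Ideal.le_comap_map
  exact (not_le_of_gt h01) (this.trans hker)

/-! ### Dimension bounds -/

lemma comap_lt_comap_of_surj {R S : Type*} [CommRing R] [CommRing S] (φ : R →+* S)
    (hs : Function.Surjective φ) {I J : Ideal S} (h : I < J) :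
    I.comap φ < J.comap φ :=
  lt_of_le_of_ne (Ideal.comap_mono h.le) fun e => h.ne (by
    rw [← Ideal.map_comap_of_surjective φ hs I, ← Ideal.map_comap_of_surjective φ hs J, e])

lemma dim_le [hp : (mQ k).IsPrime] : ringKrullDim (Localization.AtPrime (mQ k)) ≤ 2 := by
  show Order.krullDim (PrimeSpectrum (Localization.AtPrime (mQ k))) ≤ 2
  rw [Order.krullDim]
  refine iSup_le fun c => ?_
  suffices h : c.length ≤ 2 by exact_mod_cast h
  by_contra hlen
  push_neg at hlen
  set ordIso := IsLocalization.AtPrime.orderIsoOfPrime (Localization.AtPrime (mQ k)) (mQ k)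
  have hm := c.strictMono
  let idx : Fin 4 → Fin (c.length + 1) := fun j => ⟨j, by omega⟩
  let x : Fin 4 → PrimeSpectrum (Localization.AtPrime (mQ k)) := fun j => c.toFun (idx j)
  have hxlt : ∀ {i j : Fin 4}, (i : ℕ) < j → x i < x j := by
    intro i j hij
    exact hm (by simpa [idx, Fin.mk_lt_mk] using hij)
  let Q : Fin 4 → Ideal (QR k) := fun j => (ordIso ⟨(x j).asIdeal, (x j).isPrime⟩).1
  have hQprime : ∀ j, (Q j).IsPrime := fun j => (ordIso ⟨(x j).asIdeal, (x j).isPrime⟩).2.1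
  have hQlt : ∀ {i j : Fin 4}, (i : ℕ) < j → Q i < Q j := by
    intro i j hij
    have h1 : (⟨(x i).asIdeal, (x i).isPrime⟩ :
        {p : Ideal (Localization.AtPrime (mQ k)) // p.IsPrime})
        < ⟨(x j).asIdeal, (x j).isPrime⟩ := by
      rw [Subtype.mk_lt_mk]
      exact lt_of_le_of_ne (hxlt hij).le (fun e => (hxlt hij).ne (PrimeSpectrum.ext e))
    exact Subtype.coe_lt_coe.mpr (ordIso.lt_iff_lt.mpr h1)
  let p : Fin 4 → Ideal (MvPolynomial (Fin 4) k) := fun j =>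
    (Q j).comap (Ideal.Quotient.mk (defIdeal k))
  haveI hpprime : ∀ j, (p j).IsPrime := by
    intro j
    haveI := hQprime j
    exact Ideal.IsPrime.comap _
  have hplt : ∀ {i j : Fin 4}, (i : ℕ) < j → p i < p j := fun hij =>
    comap_lt_comap_of_surj _ Ideal.Quotient.mk_surjective (hQlt hij)
  have hdef : defIdeal k ≤ p 0 := by
    have : RingHom.ker (Ideal.Quotient.mk (defIdeal k)) ≤ p 0 := Ideal.ker_le_comap _
    rwa [Ideal.mk_ker] at this
  rcases (hpprime 0).inf_le.mp hdef with h | h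
  · exact chainKill k (ψab k) (ψab_surj k) (hpprime 1) (hpprime 2) (hpprime 3)
      ((ker_ψab k) ▸ h)
      (hplt (i := 0) (j := 1) (by decide)) (hplt (i := 1) (j := 2) (by decide))
      (hplt (i := 2) (j := 3) (by decide))
  · exact chainKill k (ψcd k) (ψcd_surj k) (hpprime 1) (hpprime 2) (hpprime 3)
      ((ker_ψcd k) ▸ h)
      (hplt (i := 0) (j := 1) (by decide)) (hplt (i := 1) (j := 2) (by decide))
      (hplt (i := 2) (j := 3) (by decide))

lemma dim_ge [hp : (mQ k).IsPrime] : 2 ≤ ringKrullDim (Localization.AtPrime (mQ k)) := by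
  set J0 : Ideal (MvPolynomial (Fin 4) k) := Ideal.span {X 0, X 1} with hJ0
  set J1 : Ideal (MvPolynomial (Fin 4) k) := Ideal.span {X 0, X 1, X 2} with hJ1
  set J2 : Ideal (MvPolynomial (Fin 4) k) := Ideal.span {X 0, X 1, X 2, X 3} with hJ2
  haveI hJ0p : J0.IsPrime := by rw [hJ0, ← ker_ψab k]; exact RingHom.ker_isPrime _
  haveI hJ1p : J1.IsPrime := by rw [hJ1, ← ker_ψ3 k]; exact RingHom.ker_isPrime _
  haveI hJ2p : J2.IsPrime := by rw [hJ2, ← ker_cc4 k]; exact RingHom.ker_isPrime _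
  have hd0 : defIdeal k ≤ J0 := inf_le_left
  have hd1 : defIdeal k ≤ J1 := hd0.trans (Ideal.span_mono (by intro x hx; simp at hx ⊢; tauto))
  have hd2 : defIdeal k ≤ J2 := hd1.trans (Ideal.span_mono (by intro x hx; simp at hx ⊢; tauto))
  have hX2 : (X 2 : MvPolynomial (Fin 4) k) ∉ J0 := by
    intro hmem
    rw [hJ0, ← ker_ψab k, RingHom.mem_ker] at hmem
    have : (ψab k) (X 2) = X 0 := by simp [ψab]
    rw [this] at hmem
    exact MvPolynomial.X_ne_zero _ hmem
  have hX3 : (X 3 : MvPolynomial (Fin 4) k) ∉ J1 := by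
    intro hmem
    rw [hJ1, ← ker_ψ3 k, RingHom.mem_ker] at hmem
    have : (ψ3 k) (X 3) = X 0 := by simp [ψ3]
    rw [this] at hmem
    exact MvPolynomial.X_ne_zero _ hmem
  have h01 : J0 < J1 := by
    refine lt_of_le_of_ne (Ideal.span_mono (by intro x hx; simp at hx ⊢; tauto)) fun e => ?_
    exact hX2 (e ▸ Ideal.subset_span (by simp))
  have h12 : J1 < J2 := by
    refine lt_of_le_of_ne (Ideal.span_mono (by intro x hx; simp at hx ⊢; tauto)) fun e => ?_
    exact hX3 (e ▸ Ideal.subset_span (by simp))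
  set mk4 := Ideal.Quotient.mk (defIdeal k) with hmk4
  have hmksurj : Function.Surjective mk4 := Ideal.Quotient.mk_surjective
  have hkermk : RingHom.ker mk4 = defIdeal k := Ideal.mk_ker
  have hk0 : RingHom.ker mk4 ≤ J0 := by rw [hkermk]; exact hd0
  haveI hQ0p : (J0.map mk4).IsPrime := Ideal.map_isPrime_of_surjective hmksurj hk0
  haveI hQ1p : (J1.map mk4).IsPrime :=
    Ideal.map_isPrime_of_surjective hmksurj (by rw [hkermk]; exact hd1)
  haveI hQ2p : (J2.map mk4).IsPrime :=
    Ideal.map_isPrime_of_surjective hmksurj (by rw [hkermk]; exact hd2)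
  have hQ01 : J0.map mk4 < J1.map mk4 := map_lt_map_of_surj mk4 hmksurj hk0 h01
  have hQ12 : J1.map mk4 < J2.map mk4 :=
    map_lt_map_of_surj mk4 hmksurj (by rw [hkermk]; exact hd1) h12
  have hQ2mQ : J2.map mk4 = mQ k := by
    rw [hJ2, Ideal.map_span]
    simp only [mQ, Set.image_insert_eq, Set.image_singleton, ← hmk4]
  have hle0 : J0.map mk4 ≤ mQ k := by rw [← hQ2mQ]; exact (hQ01.trans hQ12).le
  have hle1 : J1.map mk4 ≤ mQ k := by rw [← hQ2mQ]; exact hQ12.le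
  have hle2 : J2.map mk4 ≤ mQ k := hQ2mQ.le
  set ordIso := IsLocalization.AtPrime.orderIsoOfPrime (Localization.AtPrime (mQ k)) (mQ k)
  let y0 := ordIso.symm ⟨J0.map mk4, hQ0p, hle0⟩
  let y1 := ordIso.symm ⟨J1.map mk4, hQ1p, hle1⟩
  let y2 := ordIso.symm ⟨J2.map mk4, hQ2p, hle2⟩
  have hy01 : y0 < y1 := ordIso.symm.lt_iff_lt.mpr (Subtype.mk_lt_mk.mpr hQ01)
  have hy12 : y1 < y2 := ordIso.symm.lt_iff_lt.mpr (Subtype.mk_lt_mk.mpr hQ12)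
  let z0 : PrimeSpectrum (Localization.AtPrime (mQ k)) := ⟨y0.1, y0.2⟩
  let z1 : PrimeSpectrum (Localization.AtPrime (mQ k)) := ⟨y1.1, y1.2⟩
  let z2 : PrimeSpectrum (Localization.AtPrime (mQ k)) := ⟨y2.1, y2.2⟩
  have hz01 : z0 < z1 := (PrimeSpectrum.asIdeal_lt_asIdeal _ _).mp (Subtype.coe_lt_coe.mpr hy01)
  have hz12 : z1 < z2 := (PrimeSpectrum.asIdeal_lt_asIdeal _ _).mp (Subtype.coe_lt_coe.mpr hy12)
  let chain : LTSeries (PrimeSpectrum (Localization.AtPrime (mQ k))) :=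
    { length := 2
      toFun := ![z0, z1, z2]
      step := by
        intro i
        fin_cases i
        · exact hz01
        · exact hz12 }
  have hlen := Order.LTSeries.length_le_krullDim chain
  show (2 : WithBot ℕ∞) ≤ Order.krullDim (PrimeSpectrum (Localization.AtPrime (mQ k)))
  exact_mod_cast hlen

end Stmt16Aux


set_option maxHeartbeats 2000000 in
set_option synthInstance.maxHeartbeats 1000000 in
/-- in `R = (k[a,b,c,d]/((a,b) ∩ (c,d)))` localized at
`m = (a,b,c,d)`, the elements `x₁ = a + c`, `x₂ = b + d` form a system of
parameters (the ring has dimension 2 and `(x₁,x₂)` is `m`-primary), and the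
limit closure satisfies `(x₁,x₂)^lim = m`. -/
theorem stmt16 (k : Type) [Field k] [hp : (mQ k).IsPrime] :
    ∀ x₁ x₂ : Localization.AtPrime (mQ k),
      x₁ = algebraMap (QR k) (Localization.AtPrime (mQ k))
        (Ideal.Quotient.mk (defIdeal k) (X 0 + X 2)) →
      x₂ = algebraMap (QR k) (Localization.AtPrime (mQ k))
        (Ideal.Quotient.mk (defIdeal k) (X 1 + X 3)) →
      ringKrullDim (Localization.AtPrime (mQ k)) = 2 ∧
      (Ideal.span {x₁, x₂}).radical =
        IsLocalRing.maximalIdeal (Localization.AtPrime (mQ k)) ∧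
      (∀ r : Localization.AtPrime (mQ k),
        r ∈ IsLocalRing.maximalIdeal (Localization.AtPrime (mQ k)) ↔
          ∃ t : ℕ, 1 ≤ t ∧ (x₁ * x₂) ^ (t - 1) * r ∈ Ideal.span {x₁ ^ t, x₂ ^ t}) := by
  intro x₁ x₂ hx1 hx2
  haveI : IsRightCancelAdd (Localization.AtPrime (mQ k)) := ⟨fun a b c h => by
    have e1 : b + a - a = b := add_sub_cancel_right b a
    have e2 : c + a - a = c := add_sub_cancel_right c a
    rw [← e1, ← e2]
    exact congrArg (· - a) h⟩
  set mk4 : MvPolynomial (Fin 4) k →+* QR k := Ideal.Quotient.mk (defIdeal k) with hmk4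
  set ι : QR k →+* Localization.AtPrime (mQ k) :=
    algebraMap (QR k) (Localization.AtPrime (mQ k)) with hι
  set A := ι (mk4 (X 0)) with hA
  set B := ι (mk4 (X 1)) with hB
  set C' := ι (mk4 (X 2)) with hC
  set D' := ι (mk4 (X 3)) with hD
  have e1 : mk4 (X 0 + X 2) = mk4 (X 0) + mk4 (X 2) := map_add mk4 _ _
  have e2 : mk4 (X 1 + X 3) = mk4 (X 1) + mk4 (X 3) := map_add mk4 _ _
  have hx1' : x₁ = A + C' := by rw [hx1, e1, map_add ι]
  have hx2' : x₂ = B + D' := by rw [hx2, e2, map_add ι]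
  have hrel : ∀ f g : MvPolynomial (Fin 4) k, f ∈ Ideal.span {X 0, X 1} →
      g ∈ Ideal.span {X 2, X 3} → ι (mk4 f) * ι (mk4 g) = 0 := by
    intro f g hf hg
    rw [← map_mul, ← map_mul]
    rw [show mk4 (f * g) = 0 from Ideal.Quotient.eq_zero_iff_mem.mpr
      (Ideal.mem_inf.mpr ⟨Ideal.mul_mem_right _ _ hf, Ideal.mul_mem_left _ _ hg⟩),
      map_zero]
  have hAC : A * C' = 0 := hrel _ _ (Ideal.subset_span (by simp)) (Ideal.subset_span (by simp))
  have hAD : A * D' = 0 := hrel _ _ (Ideal.subset_span (by simp)) (Ideal.subset_span (by simp))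
  have hBC : B * C' = 0 := hrel _ _ (Ideal.subset_span (by simp)) (Ideal.subset_span (by simp))
  have hBD : B * D' = 0 := hrel _ _ (Ideal.subset_span (by simp)) (Ideal.subset_span (by simp))
  have hmax : IsLocalRing.maximalIdeal (Localization.AtPrime (mQ k)) =
      Ideal.span {A, B, C', D'} := by
    rw [← Localization.AtPrime.map_eq_maximalIdeal]
    show Ideal.map ι (Ideal.span {mk4 (X 0), mk4 (X 1), mk4 (X 2), mk4 (X 3)}) = _
    rw [Ideal.map_span]
    simp only [Set.image_insert_eq, Set.image_singleton]
    rfl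
  refine ⟨le_antisymm (Stmt16Aux.dim_le k) (Stmt16Aux.dim_ge k), ?_, ?_⟩
  · -- radical
    have hx1mem : x₁ ∈ Ideal.span {x₁, x₂} := Ideal.subset_span (by simp)
    have hx2mem : x₂ ∈ Ideal.span {x₁, x₂} := Ideal.subset_span (by simp)
    apply le_antisymm
    · refine (Ideal.IsPrime.radical_le_iff
        (IsLocalRing.maximalIdeal.isMaximal _).isPrime).mpr ?_
      rw [Ideal.span_le]
      rintro z (rfl | rfl)
      · rw [SetLike.mem_coe, hmax, hx1']
        exact add_mem (Ideal.subset_span (by simp)) (Ideal.subset_span (by simp))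
      · rw [SetLike.mem_coe, hmax, hx2']
        exact add_mem (Ideal.subset_span (by simp)) (Ideal.subset_span (by simp))
    · rw [hmax, Ideal.span_le]
      rintro z (rfl | rfl | rfl | rfl) <;> rw [SetLike.mem_coe, Ideal.mem_radical_iff]
      · refine ⟨2, ?_⟩
        rw [show A ^ 2 = A * x₁ by rw [hx1']; linear_combination -hAC]
        exact Ideal.mul_mem_left _ _ hx1mem
      · refine ⟨2, ?_⟩
        rw [show B ^ 2 = B * x₂ by rw [hx2']; linear_combination -hBD]
        exact Ideal.mul_mem_left _ _ hx2mem
      · refine ⟨2, ?_⟩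
        rw [show C' ^ 2 = C' * x₁ by rw [hx1']; linear_combination -hAC]
        exact Ideal.mul_mem_left _ _ hx1mem
      · refine ⟨2, ?_⟩
        rw [show D' ^ 2 = D' * x₂ by rw [hx2']; linear_combination -hBD]
        exact Ideal.mul_mem_left _ _ hx2mem
  · intro r
    constructor
    · intro hr
      refine ⟨2, by norm_num, ?_⟩
      rw [show (2:ℕ) - 1 = 1 from rfl, pow_one]
      rw [hmax] at hr
      refine Submodule.span_induction ?_ ?_ ?_ ?_ hr
      · rintro y (rfl | rfl | rfl | rfl)
        · rw [show x₁ * x₂ * A = B * x₁ ^ 2 by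
            rw [hx1', hx2']; linear_combination A * hAD - A * hBC + C' * hAD - C' * hBC]
          exact Ideal.mul_mem_left _ _ (Ideal.subset_span (by simp))
        · rw [show x₁ * x₂ * B = A * x₂ ^ 2 by
            rw [hx1', hx2']; linear_combination (B + D') * hBC - (B + D') * hAD]
          exact Ideal.mul_mem_left _ _ (Ideal.subset_span (by simp))
        · rw [show x₁ * x₂ * C' = D' * x₁ ^ 2 by
            rw [hx1', hx2']; linear_combination (A + C') * hBC - (A + C') * hAD]
          exact Ideal.mul_mem_left _ _ (Ideal.subset_span (by simp))
        · rw [show x₁ * x₂ * D' = C' * x₂ ^ 2 by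
            rw [hx1', hx2']; linear_combination (B + D') * hAD - (B + D') * hBC]
          exact Ideal.mul_mem_left _ _ (Ideal.subset_span (by simp))
      · simp
      · intro a b _ _ ha hb
        rw [mul_add]
        exact add_mem ha hb
      · intro a b _ hb
        rw [smul_eq_mul, show x₁ * x₂ * (a * b) = a * (x₁ * x₂ * b) by ring]
        exact Ideal.mul_mem_left _ _ hb
    · rintro ⟨t, ht, hmem⟩
      by_contra hr
      have hunit : IsUnit r := by
        simpa [IsLocalRing.mem_maximalIdeal, mem_nonunits_iff] using hr
      obtain ⟨u, rfl⟩ := hunit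
      have hmem' : (x₁ * x₂) ^ (t - 1) ∈ Ideal.span {x₁ ^ t, x₂ ^ t} := by
        have h2 := Ideal.mul_mem_right (↑u⁻¹ : Localization.AtPrime (mQ k)) _ hmem
        rwa [mul_assoc, Units.mul_inv, mul_one] at h2
      -- set up the projection to k[a,b] localized at (a,b)
      set P2 : Ideal (MvPolynomial (Fin 2) k) := Ideal.span {X 0, X 1} with hP2def
      haveI hPp : P2.IsPrime := by
        rw [hP2def, ← Stmt16Aux.ker_cc2 k]; exact RingHom.ker_isPrime _
      set algT : MvPolynomial (Fin 2) k →+* Localization.AtPrime P2 :=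
        algebraMap _ (Localization.AtPrime P2) with halgT
      have hlift : ∀ a ∈ defIdeal k, (Stmt16Aux.ψcd k).toRingHom a = 0 := by
        intro a ha
        have h3 : a ∈ RingHom.ker (Stmt16Aux.ψcd k) := by
          rw [Stmt16Aux.ker_ψcd k]
          exact (Ideal.mem_inf.mp ha).2
        exact h3
      set θ : QR k →+* MvPolynomial (Fin 2) k :=
        Ideal.Quotient.lift (defIdeal k) (Stmt16Aux.ψcd k).toRingHom hlift with hθ
      have hθmk : ∀ f, θ (mk4 f) = (Stmt16Aux.ψcd k) f := fun f =>
        Ideal.Quotient.lift_mk _ _ _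
      have hgunit : ∀ s : (mQ k).primeCompl, IsUnit ((algT.comp θ) s) := by
        rintro ⟨s, hs⟩
        obtain ⟨f, rfl⟩ := Ideal.Quotient.mk_surjective (I := defIdeal k) s
        show IsUnit (algT (θ (mk4 f)))
        rw [hθmk, halgT]
        rw [IsLocalization.AtPrime.isUnit_to_map_iff (Localization.AtPrime P2) P2]
        show (Stmt16Aux.ψcd k) f ∉ P2
        intro hmem2
        apply hs
        have h1 : constantCoeff ((Stmt16Aux.ψcd k) f) = 0 := by
          rw [hP2def, ← Stmt16Aux.ker_cc2 k] at hmem2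
          exact hmem2
        have h2 : constantCoeff f = 0 := by
          rw [← RingHom.congr_fun (Stmt16Aux.cc_comp_ψcd k) f]
          exact h1
        have h3 : f ∈ Ideal.span {X 0, X 1, X 2, X 3} := by
          rw [← Stmt16Aux.ker_cc4 k]
          exact h2
        have h4 : mQ k = Ideal.map mk4 (Ideal.span {X 0, X 1, X 2, X 3}) := by
          simp only [mQ]
          rw [Ideal.map_span]
          simp only [Set.image_insert_eq, Set.image_singleton]
          rfl
        rw [h4]
        exact Ideal.mem_map_of_mem _ h3
      set Φ : Localization.AtPrime (mQ k) →+* Localization.AtPrime P2 :=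
        IsLocalization.lift (M := (mQ k).primeCompl) hgunit with hΦ
      have hΦι : ∀ y, Φ (ι y) = algT (θ y) := fun y => IsLocalization.lift_eq hgunit y
      have hΦx1 : Φ x₁ = algT (X 0) := by
        rw [hx1']
        rw [show A + C' = ι (mk4 (X 0 + X 2)) by rw [map_add, map_add], hΦι, hθmk]
        congr 1
        simp [Stmt16Aux.ψcd]
      have hΦx2 : Φ x₂ = algT (X 1) := by
        rw [hx2']
        rw [show B + D' = ι (mk4 (X 1 + X 3)) by rw [map_add, map_add], hΦι, hθmk]
        congr 1
        simp [Stmt16Aux.ψcd]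
      obtain ⟨cu, cv, hcu⟩ := Ideal.mem_span_pair.mp hmem'
      have key : algT ((X 0 * X 1) ^ (t - 1)) ∈
          Ideal.map algT (Ideal.span {X 0 ^ t, X 1 ^ t}) := by
        rw [Ideal.map_span, Set.image_insert_eq, Set.image_singleton]
        refine Ideal.mem_span_pair.mpr ⟨Φ cu, Φ cv, ?_⟩
        have h5 := congrArg Φ hcu
        rw [map_add, map_mul, map_mul, map_pow, map_pow, map_pow, map_mul,
          hΦx1, hΦx2] at h5
        rw [map_pow, map_pow, map_pow, map_mul]
        exact h5
      obtain ⟨⟨i, s⟩, heq⟩ :=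
        (IsLocalization.mem_map_algebraMap_iff P2.primeCompl (Localization.AtPrime P2)).mp key
      have hinj : Function.Injective algT :=
        IsLocalization.injective _ P2.primeCompl_le_nonZeroDivisors
      have heq2 : (X 0 * X 1) ^ (t - 1) * (s : MvPolynomial (Fin 2) k) = (i : MvPolynomial (Fin 2) k) := by
        apply hinj
        rw [map_mul]
        exact heq
      set μ : Fin 2 →₀ ℕ := Finsupp.single 0 (t - 1) + Finsupp.single 1 (t - 1) with hμ
      have hmono : ((X 0 * X 1 : MvPolynomial (Fin 2) k)) ^ (t - 1) = monomial μ 1 := by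
        rw [mul_pow, X_pow_eq_monomial, X_pow_eq_monomial, monomial_mul, one_mul]
      have hc1 : coeff μ ((X 0 * X 1 : MvPolynomial (Fin 2) k) ^ (t - 1) * (s : MvPolynomial (Fin 2) k)) =
          constantCoeff (s : MvPolynomial (Fin 2) k) := by
        rw [hmono, mul_comm]
        calc coeff μ ((s : MvPolynomial (Fin 2) k) * monomial μ 1)
            = coeff (0 + μ) ((s : MvPolynomial (Fin 2) k) * monomial μ 1) := by rw [zero_add]
          _ = coeff 0 (s : MvPolynomial (Fin 2) k) * 1 := coeff_mul_monomial _ _ _ _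
          _ = constantCoeff (s : MvPolynomial (Fin 2) k) := by
              rw [mul_one, constantCoeff_eq]
      have hnotle : ∀ j : Fin 2, ¬ Finsupp.single j t ≤ μ := by
        intro j hle
        have h6 := hle j
        rw [hμ] at h6
        fin_cases j <;>
          simp [Finsupp.single_apply] at h6 <;> omega
      have hc2 : coeff μ (i : MvPolynomial (Fin 2) k) = 0 := by
        obtain ⟨c1, c2, hi⟩ := Ideal.mem_span_pair.mp i.2
        rw [← hi, coeff_add, X_pow_eq_monomial, X_pow_eq_monomial,
          Stmt16Aux.coeff_mul_monomial_notle (hnotle 0) _ _,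
          Stmt16Aux.coeff_mul_monomial_notle (hnotle 1) _ _, add_zero]
      have hccs : constantCoeff (s : MvPolynomial (Fin 2) k) = 0 := by
        rw [← hc1, heq2, hc2]
      have hsP : (s : MvPolynomial (Fin 2) k) ∈ P2 := by
        have h9 : (s : MvPolynomial (Fin 2) k) ∈
            RingHom.ker (constantCoeff : MvPolynomial (Fin 2) k →+* k) := hccs
        rwa [Stmt16Aux.ker_cc2 k, ← hP2def] at h9
      exact s.2 hsP
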